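/- Let G be a subgroup of the Paige loop over F₂ isomorphic to S₃, and let x = [[1,α],[β,1]], y = [[1,γ],[δ,1]] be two distinct involutions in G with diagonal entries equal to 1. Then the third involution xyx of G has diagonal entries equal to 0, i.e., has the form [[0,ε],[φ,0]]. -/
import Mathlib


/-- Zorn vector matrices over the field with two elements. -/
structure Zorn2 where
  a : ZMod 2
  alpha : Fin 3 → ZMod 2
  beta : Fin 3 → ZMod 2
  b : ZMod 2

namespace Zorn2

/-- Standard dot product on `F₂³`. -/
def zdot (u v : Fin 3 → ZMod 2) : ZMod 2 := u 0 * v 0 + u 1 * v 1 + u 2 * v 2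

/-- Standard cross product on `F₂³`. -/
def zcross (u v : Fin 3 → ZMod 2) : Fin 3 → ZMod 2 :=
  ![u 1 * v 2 - u 2 * v 1, u 2 * v 0 - u 0 * v 2, u 0 * v 1 - u 1 * v 0]

/-- Zorn's vector matrix multiplication. -/
instance : Mul Zorn2 :=
  ⟨fun x y =>
    { a := x.a * y.a + zdot x.alpha y.beta
      alpha := fun i => x.a * y.alpha i + x.alpha i * y.b - zcross x.beta y.beta i
      beta := fun i => x.beta i * y.a + x.b * y.beta i + zcross x.alpha y.alpha i
      b := zdot x.beta y.alpha + x.b * y.b }⟩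

instance : One Zorn2 := ⟨{ a := 1, alpha := fun _ => 0, beta := fun _ => 0, b := 1 }⟩

instance : Add Zorn2 :=
  ⟨fun x y => { a := x.a + y.a, alpha := x.alpha + y.alpha,
                beta := x.beta + y.beta, b := x.b + y.b }⟩

/-- Determinant (norm) of a Zorn vector matrix. -/
def det (x : Zorn2) : ZMod 2 := x.a * x.b - zdot x.alpha x.beta

/-- `x` has multiplicative order 2. -/
def ord2 (x : Zorn2) : Prop := x * x = 1 ∧ x ≠ 1

/-- `x` has multiplicative order 3. -/
def ord3 (x : Zorn2) : Prop := x * (x * x) = 1 ∧ x * x ≠ 1 ∧ x ≠ 1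

end Zorn2

open Zorn2

/-- Extensionality for `Zorn2`. -/
lemma Zorn2.zext (x y : Zorn2) (ha : x.a = y.a) (hal : ∀ i, x.alpha i = y.alpha i)
    (hbe : ∀ i, x.beta i = y.beta i) (hb : x.b = y.b) : x = y := by
  cases x; cases y
  simp only [Zorn2.mk.injEq] at *
  exact ⟨ha, funext hal, funext hbe, hb⟩

lemma Zorn2.one_mul_one : (1 : Zorn2) * 1 = 1 := by
  apply Zorn2.zext <;> first
    | decide
    | (intro i; fin_cases i <;> decide)

set_option maxHeartbeats 4000000 in
set_option synthInstance.maxHeartbeats 1000000 in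
set_option synthInstance.maxSize 2000 in
/-- Key `F₂` computation. -/
lemma Zorn2.key : ∀ α β γ δ : Fin 3 → ZMod 2,
    (¬ ∀ i, α i = γ i ∧ β i = δ i) →
    det (⟨1, α, β, 1⟩ : Zorn2) = 1 → det (⟨1, γ, δ, 1⟩ : Zorn2) = 1 →
    (∀ i, ((⟨1, α, β, 1⟩ : Zorn2) * ⟨1, α, β, 1⟩).alpha i = 0) →
    (∀ i, ((⟨1, α, β, 1⟩ : Zorn2) * ⟨1, α, β, 1⟩).beta i = 0) →
    (∀ i, ((⟨1, γ, δ, 1⟩ : Zorn2) * ⟨1, γ, δ, 1⟩).alpha i = 0) →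
    (∀ i, ((⟨1, γ, δ, 1⟩ : Zorn2) * ⟨1, γ, δ, 1⟩).beta i = 0) →
    (((⟨1, α, β, 1⟩ : Zorn2) * ⟨1, γ, δ, 1⟩) * (((⟨1, α, β, 1⟩ : Zorn2) * ⟨1, γ, δ, 1⟩) * ((⟨1, α, β, 1⟩ : Zorn2) * ⟨1, γ, δ, 1⟩))).a = 1 →
    (((⟨1, α, β, 1⟩ : Zorn2) * ⟨1, γ, δ, 1⟩) * (((⟨1, α, β, 1⟩ : Zorn2) * ⟨1, γ, δ, 1⟩) * ((⟨1, α, β, 1⟩ : Zorn2) * ⟨1, γ, δ, 1⟩))).b = 1 →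
    (∀ i, (((⟨1, α, β, 1⟩ : Zorn2) * ⟨1, γ, δ, 1⟩) * (((⟨1, α, β, 1⟩ : Zorn2) * ⟨1, γ, δ, 1⟩) * ((⟨1, α, β, 1⟩ : Zorn2) * ⟨1, γ, δ, 1⟩))).alpha i = 0) →
    (∀ i, (((⟨1, α, β, 1⟩ : Zorn2) * ⟨1, γ, δ, 1⟩) * (((⟨1, α, β, 1⟩ : Zorn2) * ⟨1, γ, δ, 1⟩) * ((⟨1, α, β, 1⟩ : Zorn2) * ⟨1, γ, δ, 1⟩))).beta i = 0) →
    (((⟨1, α, β, 1⟩ : Zorn2) * ⟨1, γ, δ, 1⟩) * ⟨1, α, β, 1⟩).a = 0 ∧ (((⟨1, α, β, 1⟩ : Zorn2) * ⟨1, γ, δ, 1⟩) * ⟨1, α, β, 1⟩).b = 0 := by decide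

/-- In `S₃`, two distinct nontrivial involutions multiply to an element of order 3. -/
lemma s3_fact : ∀ g h : Equiv.Perm (Fin 3), g * g = 1 → h * h = 1 → g ≠ 1 → h ≠ 1 →
    g ≠ h → (g * h) * ((g * h) * (g * h)) = 1 := by decide

open Zorn2 in
/-- In a subgroup of the Paige loop over `F₂` isomorphic to `S₃` (realized as a
multiplication-preserving injection of `S₃` into the determinant-one elements),
if `x`, `y` are distinct involutions with diagonal entries `1`, then the third
involution `xyx` has diagonal entries `0`. -/
theorem stmt10 (e : Equiv.Perm (Fin 3) → Zorn2)
    (hinj : Function.Injective e)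
    (hmul : ∀ g h : Equiv.Perm (Fin 3), e (g * h) = e g * e h)
    (hdet : ∀ g : Equiv.Perm (Fin 3), Zorn2.det (e g) = 1)
    (x y : Zorn2) (hx : x ∈ Set.range e) (hy : y ∈ Set.range e) (hxy : x ≠ y)
    (hx2 : Zorn2.ord2 x) (hy2 : Zorn2.ord2 y)
    (hxa : x.a = 1) (hxb : x.b = 1) (hya : y.a = 1) (hyb : y.b = 1) :
    ((x * y) * x).a = 0 ∧ ((x * y) * x).b = 0 := by
  obtain ⟨g, hg⟩ := hx
  obtain ⟨h, hh⟩ := hy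
  -- g is an involution in S₃
  have hg2 : g * g = 1 := by
    have h4 : e ((g * g) * (g * g)) = e ((g * g) * 1) := by
      rw [hmul, hmul, hg, hx2.1, Zorn2.one_mul_one, mul_one, hmul, hg, hx2.1]
    have := hinj h4
    exact mul_left_cancel this
  have hh2 : h * h = 1 := by
    have h4 : e ((h * h) * (h * h)) = e ((h * h) * 1) := by
      rw [hmul, hmul, hh, hy2.1, Zorn2.one_mul_one, mul_one, hmul, hh, hy2.1]
    have := hinj h4
    exact mul_left_cancel this
  have he1 : e 1 = 1 := by rw [← hg2, hmul, hg, hx2.1]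
  have hgne : g ≠ 1 := fun hc => hx2.2 (by rw [← hg, hc, he1])
  have hhne : h ≠ 1 := fun hc => hy2.2 (by rw [← hh, hc, he1])
  have hgh : g ≠ h := fun hc => hxy (by rw [← hg, ← hh, hc])
  -- x*y has order dividing 3
  have h3 : (x * y) * ((x * y) * (x * y)) = 1 := by
    have := s3_fact g h hg2 hh2 hgne hhne hgh
    have h5 : e ((g * h) * ((g * h) * (g * h))) = (x * y) * ((x * y) * (x * y)) := by
      simp only [hmul, hg, hh]
    rw [this, he1] at h5
    exact h5.symm
  have hdx : Zorn2.det x = 1 := by rw [← hg]; exact hdet g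
  have hdy : Zorn2.det y = 1 := by rw [← hh]; exact hdet h
  have hxx := hx2.1
  have hyy := hy2.1
  clear hg hh hg2 hh2 he1 hgne hhne hgh hx2 hy2
  obtain ⟨xa, xal, xbe, xb⟩ := x
  obtain ⟨ya, yal, ybe, yb⟩ := y
  simp only at hxa hxb hya hyb
  subst hxa hxb hya hyb
  refine Zorn2.key xal xbe yal ybe ?_ hdx hdy
    (fun i => congrFun (congrArg Zorn2.alpha hxx) i)
    (fun i => congrFun (congrArg Zorn2.beta hxx) i)
    (fun i => congrFun (congrArg Zorn2.alpha hyy) i)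
    (fun i => congrFun (congrArg Zorn2.beta hyy) i)
    (congrArg Zorn2.a h3) (congrArg Zorn2.b h3)
    (fun i => congrFun (congrArg Zorn2.alpha h3) i)
    (fun i => congrFun (congrArg Zorn2.beta h3) i)
  intro hall
  exact hxy (Zorn2.zext _ _ rfl (fun i => (hall i).1) (fun i => (hall i).2) rfl)
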